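/- Let A ∈ ℝ^{n×n} be such that there exist M ≥ 1 and θ ∈ (0,1) with ‖Aᵏ‖ ≤ M θᵏ for all k ∈ ℕ (operator norm induced by the Euclidean norm), let B ∈ ℝ^{n×m}, and let Ω ⊆ ℝᵐ be a nonempty compact set. Define F̄ = {Σ_{i=0}^∞ Aⁱ B ε_i : ε : ℕ → ℝᵐ, ε_i ∈ Ω for all i}, noting each such series converges absolutely. Then: (i) F̄ is a nonempty compact subset of ℝⁿ; and (ii) A·F̄ ⊕ B·Ω ⊆ F̄, where A·F̄ = {A x : x ∈ F̄}, B·Ω = {B ε : ε ∈ Ω}, and ⊕ is the Minkowski sum. -/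

import Mathlib

open Matrix Pointwise

section aux

variable {n m : ℕ}

/-- Bundled continuous linear map `v ↦ (A^i * B).mulVec v`. -/
noncomputable def stmtT (A : Matrix (Fin n) (Fin n) ℝ) (B : Matrix (Fin n) (Fin m) ℝ) (i : ℕ) :
    (Fin m → ℝ) →L[ℝ] (Fin n → ℝ) :=
  LinearMap.toContinuousLinearMap ((A ^ i * B).mulVecLin)

lemma stmtT_apply (A : Matrix (Fin n) (Fin n) ℝ) (B : Matrix (Fin n) (Fin m) ℝ) (i : ℕ)
    (v : Fin m → ℝ) : stmtT A B i v = (A ^ i * B).mulVec v := rfl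

/-- Quantitative bound through the Euclidean operator norm hypothesis. -/
lemma stmtT_bound (A : Matrix (Fin n) (Fin n) ℝ) (B : Matrix (Fin n) (Fin m) ℝ)
    (M θ : ℝ) (hθ0 : 0 < θ)
    (hA : ∀ k : ℕ, ‖Matrix.toEuclideanCLM (𝕜 := ℝ) (A ^ k)‖ ≤ M * θ ^ k) :
    ∃ c : ℝ, 0 ≤ c ∧ ∀ (i : ℕ) (v : Fin m → ℝ),
      ‖stmtT A B i v‖ ≤ c * (M * θ ^ i) * ‖v‖ := by
  classical
  -- `eN : EuclideanSpace → pi`, `bE : pi → EuclideanSpace` (with `B`)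
  set eN : EuclideanSpace ℝ (Fin n) →L[ℝ] (Fin n → ℝ) :=
    (PiLp.continuousLinearEquiv 2 ℝ (fun _ : Fin n => ℝ)).toContinuousLinearMap with heN
  set bE : (Fin m → ℝ) →L[ℝ] EuclideanSpace ℝ (Fin n) :=
    LinearMap.toContinuousLinearMap
      (((PiLp.continuousLinearEquiv 2 ℝ (fun _ : Fin n => ℝ)).symm :
          (Fin n → ℝ) →ₗ[ℝ] EuclideanSpace ℝ (Fin n)) ∘ₗ B.mulVecLin) with hbE
  refine ⟨‖eN‖ * ‖bE‖, by positivity, fun i v => ?_⟩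
  have hMθ : 0 ≤ M * θ ^ i :=
    le_trans (norm_nonneg _) (hA i)
  have key : stmtT A B i v =
      eN (Matrix.toEuclideanCLM (𝕜 := ℝ) (A ^ i) (bE v)) := by
    simp only [stmtT_apply, heN, hbE, ContinuousLinearEquiv.coe_coe,
      LinearMap.coe_toContinuousLinearMap', LinearMap.coe_comp, Function.comp_apply,
      Matrix.mulVecLin_apply, LinearMap.coe_toContinuousLinearMap]
    rw [show ((PiLp.continuousLinearEquiv 2 ℝ (fun _ : Fin n => ℝ)).symm :
        (Fin n → ℝ) →ₗ[ℝ] EuclideanSpace ℝ (Fin n)) (B.mulVec v)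
        = WithLp.toLp 2 (B.mulVec v) from rfl,
      Matrix.toEuclideanCLM_toLp]
    simp [PiLp.continuousLinearEquiv, Matrix.toLin'_apply, Matrix.mulVec_mulVec]
    rfl
  rw [key]
  calc ‖eN (Matrix.toEuclideanCLM (𝕜 := ℝ) (A ^ i) (bE v))‖
      ≤ ‖eN‖ * ‖Matrix.toEuclideanCLM (𝕜 := ℝ) (A ^ i) (bE v)‖ := eN.le_opNorm _
    _ ≤ ‖eN‖ * (‖Matrix.toEuclideanCLM (𝕜 := ℝ) (A ^ i)‖ * ‖bE v‖) := by
        gcongr; exact (Matrix.toEuclideanCLM (𝕜 := ℝ) (A ^ i)).le_opNorm _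
    _ ≤ ‖eN‖ * ((M * θ ^ i) * (‖bE‖ * ‖v‖)) := by
        gcongr
        · exact hA i
        · exact bE.le_opNorm v
    _ = ‖eN‖ * ‖bE‖ * (M * θ ^ i) * ‖v‖ := by ring

end aux

/-- Let `A ∈ ℝ^{n×n}` with `‖Aᵏ‖ ≤ M θᵏ` (`M ≥ 1`, `θ ∈ (0,1)`,
Euclidean operator norm via `Matrix.toEuclideanCLM`), `B ∈ ℝ^{n×m}`, and `Ω ⊆ ℝᵐ`
nonempty compact. With `F̄ = {Σ_{i=0}^∞ Aⁱ B ε_i : ε_i ∈ Ω ∀i}` (written with `∑'`;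
the series converge absolutely): (i) `F̄` is nonempty and compact; and
(ii) `A·F̄ ⊕ B·Ω ⊆ F̄`. -/
theorem stmt_18 {n m : ℕ} (A : Matrix (Fin n) (Fin n) ℝ) (B : Matrix (Fin n) (Fin m) ℝ)
    (M θ : ℝ) (hM : 1 ≤ M) (hθ : θ ∈ Set.Ioo (0 : ℝ) 1)
    (hA : ∀ k : ℕ, ‖Matrix.toEuclideanCLM (𝕜 := ℝ) (A ^ k)‖ ≤ M * θ ^ k)
    (Ω : Set (Fin m → ℝ)) (hΩne : Ω.Nonempty) (hΩc : IsCompact Ω)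
    (Fbar : Set (Fin n → ℝ))
    (hFbar : Fbar = {x | ∃ ε : ℕ → Fin m → ℝ, (∀ i : ℕ, ε i ∈ Ω) ∧
      x = ∑' i : ℕ, (A ^ i * B).mulVec (ε i)}) :
    (Fbar.Nonempty ∧ IsCompact Fbar) ∧
      A.mulVec '' Fbar + B.mulVec '' Ω ⊆ Fbar := by
  classical
  obtain ⟨hθ0, hθ1⟩ := hθ
  obtain ⟨c, hc0, hcb⟩ := stmtT_bound A B M θ hθ0 hA
  -- bound on Ω
  obtain ⟨R, hR⟩ := hΩc.isBounded.exists_norm_le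
  have hR0 : 0 ≤ R := le_trans (norm_nonneg _) (hR _ hΩne.choose_spec)
  -- the uniform summable bound
  set u : ℕ → ℝ := fun i => c * M * R * θ ^ i with hu
  have hus : Summable u := (summable_geometric_of_lt_one hθ0.le hθ1).mul_left _
  have hub : ∀ (i : ℕ) (v : Fin m → ℝ), v ∈ Ω → ‖stmtT A B i v‖ ≤ u i := by
    intro i v hv
    calc ‖stmtT A B i v‖ ≤ c * (M * θ ^ i) * ‖v‖ := hcb i v
      _ ≤ c * (M * θ ^ i) * R := by
          have : (0:ℝ) ≤ c * (M * θ ^ i) := by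
            have hM0 : (0:ℝ) ≤ M := le_trans zero_le_one hM
            positivity
          exact mul_le_mul_of_nonneg_left (hR v hv) this
      _ = u i := by simp [hu]; ring
  -- summability for sequences valued in Ω
  have hsum : ∀ ε : ℕ → Fin m → ℝ, (∀ i, ε i ∈ Ω) →
      Summable fun i => (A ^ i * B).mulVec (ε i) := by
    intro ε hε
    refine Summable.of_norm_bounded hus fun i => ?_
    simpa [stmtT_apply] using hub i (ε i) (hε i)
  -- Fbar as image of the compact product
  set S : Set (ℕ → Fin m → ℝ) := Set.pi Set.univ (fun _ => Ω) with hS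
  have hScomp : IsCompact S := isCompact_univ_pi fun _ => hΩc
  set Φ : (ℕ → Fin m → ℝ) → (Fin n → ℝ) := fun ε => ∑' i, stmtT A B i (ε i) with hΦ
  have hΦcont : ContinuousOn Φ S := by
    refine continuousOn_tsum (fun i => ?_) hus ?_
    · exact ((stmtT A B i).continuous.comp (continuous_apply i)).continuousOn
    · intro i ε hε
      exact hub i (ε i) (hε i (Set.mem_univ i))
  have hFim : Fbar = Φ '' S := by
    rw [hFbar]
    ext x
    constructor
    · rintro ⟨ε, hε, rfl⟩
      exact ⟨ε, fun i _ => hε i, rfl⟩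
    · rintro ⟨ε, hε, rfl⟩
      exact ⟨ε, fun i => hε i (Set.mem_univ i), rfl⟩
  obtain ⟨ω₀, hω₀⟩ := hΩne
  refine ⟨⟨?_, ?_⟩, ?_⟩
  · rw [hFbar]
    exact ⟨_, ⟨fun _ => ω₀, fun _ => hω₀, rfl⟩⟩
  · rw [hFim]
    exact hScomp.image_of_continuousOn hΦcont
  · rintro z ⟨a, ⟨x, hx, rfl⟩, b, ⟨ω, hω, rfl⟩, rfl⟩
    rw [hFbar] at hx
    obtain ⟨ε, hε, rfl⟩ := hx
    set ε' : ℕ → Fin m → ℝ := fun k => Nat.casesOn k ω ε with hε'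
    have hε'Ω : ∀ i, ε' i ∈ Ω := by
      intro i; cases i with
      | zero => exact hω
      | succ k => exact hε k
    rw [hFbar]
    refine ⟨ε', hε'Ω, ?_⟩
    have hs' := hsum ε' hε'Ω
    rw [Summable.tsum_eq_zero_add hs']
    have h0 : (A ^ 0 * B).mulVec (ε' 0) = B.mulVec ω := by simp [hε']
    have hshift : ∀ i : ℕ, (A ^ (i + 1) * B).mulVec (ε' (i + 1)) =
        A.mulVec ((A ^ i * B).mulVec (ε i)) := by
      intro i
      simp [hε', pow_succ', Matrix.mul_assoc, ← Matrix.mulVec_mulVec]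
    have hAcomm : A.mulVec (∑' i, (A ^ i * B).mulVec (ε i)) =
        ∑' i, A.mulVec ((A ^ i * B).mulVec (ε i)) := by
      have := (LinearMap.toContinuousLinearMap A.mulVecLin).map_tsum (hsum ε hε)
      simpa using this
    simp only [h0, hshift]
    rw [hAcomm]
    abel
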